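/- Let x_1, …, x_p be i.i.d. Gaussian random vectors N(μ, I_d) in ℝ^d, let x'_1, …, x'_q be i.i.d. Gaussian random vectors N(ν, I_d), with the two families independent of each other. Define the cross-class estimator T = (1/(p·q))·Σ_{k=1}^{p} Σ_{l=1}^{q} ⟨x_k, x'_l⟩. Then T is an unbiased estimator of the mean inner product, E[T] = ⟨μ, ν⟩, and its variance equals Var(T) = ‖μ‖²/q + ‖ν‖²/p + d/(p·q). -/

import Mathlib

open MeasureTheory ProbabilityTheory Real Set
open scoped ENNReal NNReal

namespace CrossClass



lemma pdf_std (x : ℝ) : gaussianPDFReal 0 1 x = (√(2*π))⁻¹ * rexp (-(1/2) * x^2) := by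
  simp only [gaussianPDFReal, NNReal.coe_one, mul_one, sub_zero]
  congr 1
  ring

lemma int_e0 : ∫ x : ℝ, rexp (-(1/2) * x^2) = √(2*π) := by
  rw [integral_gaussian, show π / (1/2) = 2 * π by ring]

lemma integrable_pow_mul_exp (n : ℕ) :
    Integrable (fun x : ℝ => x ^ n * rexp (-(1/2) * x^2)) := by
  have := integrable_rpow_mul_exp_neg_mul_sq (b := 1/2) (by norm_num) (s := (n : ℝ))
    (lt_of_lt_of_le neg_one_lt_zero (Nat.cast_nonneg n))
  simpa [Real.rpow_natCast] using this

lemma int_e1 : ∫ x : ℝ, x * rexp (-(1/2) * x^2) = 0 := by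
  have h := (Measure.measurePreserving_neg (volume : Measure ℝ)).integral_comp
      (Homeomorph.neg ℝ).measurableEmbedding (fun y : ℝ => y * rexp (-(1/2) * y^2))
  simp only [Homeomorph.neg, Equiv.neg, Equiv.coe_fn_mk, Homeomorph.homeomorph_mk_coe,
    neg_sq, neg_mul] at h
  rw [integral_neg] at h
  simp only [neg_mul] at h ⊢
  linarith [h]

lemma int_e2 : ∫ x : ℝ, x^2 * rexp (-(1/2) * x^2) = √(2*π) := by
  have hIoi : ∫ x in Ioi (0:ℝ), x^2 * rexp (-(1/2) * x^2)
      = (1/2 : ℝ) ^ ((-((2:ℝ)+1))/2) * (1/2) * Real.Gamma (((2:ℝ)+1)/2) := by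
    have h := integral_rpow_mul_exp_neg_mul_rpow (p := 2) (q := 2) (b := 1/2)
      (by norm_num) (by norm_num) (by norm_num)
    rw [← h]
    refine setIntegral_congr_fun measurableSet_Ioi (fun x hx => ?_)
    rw [show (2:ℝ) = ((2:ℕ):ℝ) by norm_num, Real.rpow_natCast]
  have hIic : ∫ x in Iic (0:ℝ), x^2 * rexp (-(1/2) * x^2)
      = ∫ x in Ioi (0:ℝ), x^2 * rexp (-(1/2) * x^2) := by
    rw [show (0:ℝ) = -0 by norm_num, ← integral_comp_neg_Ioi]
    simp
  have hsplit : ∫ x : ℝ, x^2 * rexp (-(1/2) * x^2)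
      = (∫ x in Iic (0:ℝ), x^2 * rexp (-(1/2) * x^2))
        + ∫ x in Ioi (0:ℝ), x^2 * rexp (-(1/2) * x^2) := by
    rw [← setIntegral_union (Iic_disjoint_Ioi le_rfl) measurableSet_Ioi
      ((integrable_pow_mul_exp 2).integrableOn) ((integrable_pow_mul_exp 2).integrableOn),
      Iic_union_Ioi, ← setIntegral_univ]
  rw [hsplit, hIic, hIoi]
  rw [show ((-((2:ℝ)+1))/2) = (-3)/2 by norm_num,
    Real.rpow_div_two_eq_sqrt _ (by norm_num : (0:ℝ) ≤ 1/2),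
    show (((2:ℝ)+1)/2) = 1/2 + 1 by norm_num, Real.Gamma_add_one (by norm_num),
    Real.Gamma_one_half_eq]
  have h2 : √(1/2) = (√2)⁻¹ := by
    rw [show (1/2 : ℝ) = 2⁻¹ by norm_num, Real.sqrt_inv]
  have h3 : √(1/2) ^ (-3 : ℝ) = (√2) ^ (3:ℕ) := by
    rw [h2, Real.inv_rpow (Real.sqrt_nonneg 2), ← Real.rpow_neg (Real.sqrt_nonneg 2), neg_neg,
      show (3:ℝ) = ((3:ℕ):ℝ) by norm_num, Real.rpow_natCast]
  rw [h3]
  have h4 : (√2) ^ (3:ℕ) = 2 * √2 := by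
    rw [pow_succ, sq_sqrt (by norm_num : (0:ℝ) ≤ 2)]
  rw [h4, Real.sqrt_mul (by norm_num : (0:ℝ) ≤ 2)]
  ring


noncomputable def c : ℝ := (√(2*π))⁻¹

lemma gaussianReal_one_eq (m : ℝ) :
    gaussianReal m 1
      = volume.withDensity (fun x => ((gaussianPDFReal m 1 x).toNNReal : ℝ≥0∞)) :=
  gaussianReal_of_var_ne_zero m one_ne_zero

lemma std_smul (n : ℕ) : (fun x : ℝ => (gaussianPDFReal 0 1 x).toNNReal • x ^ n)
    = fun x : ℝ => c * (x ^ n * rexp (-(1/2) * x^2)) := by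
  ext x
  rw [NNReal.smul_def, Real.coe_toNNReal _ (gaussianPDFReal_nonneg 0 1 x), pdf_std]
  simp only [smul_eq_mul, c]
  ring

lemma std_integrable_poly (n : ℕ) : Integrable (fun x : ℝ => x ^ n) (gaussianReal 0 1) := by
  rw [gaussianReal_one_eq, integrable_withDensity_iff_integrable_smul
    ((measurable_gaussianPDFReal 0 1).real_toNNReal)]
  rw [std_smul]
  exact (integrable_pow_mul_exp n).const_mul c

lemma std_integral_poly (n : ℕ) :
    ∫ x, x ^ n ∂(gaussianReal 0 1) = c * ∫ x : ℝ, x ^ n * rexp (-(1/2) * x^2) := by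
  rw [gaussianReal_one_eq, integral_withDensity_eq_integral_smul
    ((measurable_gaussianPDFReal 0 1).real_toNNReal), std_smul, integral_const_mul]

lemma std_integral_one : ∫ x, x ∂(gaussianReal 0 1) = 0 := by
  have h := std_integral_poly 1
  simp only [pow_one] at h
  rw [h, int_e1, mul_zero]

lemma std_integral_two : ∫ x, x ^ 2 ∂(gaussianReal 0 1) = 1 := by
  rw [std_integral_poly 2, int_e2, c, inv_mul_cancel₀ (by positivity)]

lemma gauss_map_add (m : ℝ) : gaussianReal m 1 = (gaussianReal 0 1).map (· + m) := by
  rw [gaussianReal_map_add_const, zero_add]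

lemma emb_add (m : ℝ) : MeasurableEmbedding (fun x : ℝ => x + m) :=
  (Homeomorph.addRight m).measurableEmbedding

lemma gauss_facts (m : ℝ) :
    Integrable (fun x : ℝ => x) (gaussianReal m 1) ∧
    Integrable (fun x : ℝ => x ^ 2) (gaussianReal m 1) ∧
    (∫ x, x ∂(gaussianReal m 1)) = m ∧
    (∫ x, x ^ 2 ∂(gaussianReal m 1)) = 1 + m ^ 2 := by
  have h1 : Integrable (fun x : ℝ => x + m) (gaussianReal 0 1) := by
    simpa using (std_integrable_poly 1).add (integrable_const m)
  have h2 : Integrable (fun x : ℝ => (x + m) ^ 2) (gaussianReal 0 1) := by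
    have : (fun x : ℝ => (x + m)^2) = fun x : ℝ => x^2 + ((2*m) * x + m^2) := by
      ext x; ring
    rw [this]
    refine (std_integrable_poly 2).add ?_
    simpa using ((std_integrable_poly 1).const_mul (2*m)).add (integrable_const (m^2))
  refine ⟨?_, ?_, ?_, ?_⟩
  · rw [gauss_map_add]
    exact ((emb_add m).integrable_map_iff).mpr h1
  · rw [gauss_map_add]
    exact ((emb_add m).integrable_map_iff).mpr h2
  · rw [gauss_map_add, integral_map (f := fun x : ℝ => x) (emb_add m).measurable.aemeasurable
      measurable_id.aestronglyMeasurable]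
    rw [integral_add (by simpa using std_integrable_poly 1) (integrable_const m)]
    simp [std_integral_one]
  · rw [gauss_map_add, integral_map (f := fun x : ℝ => x ^ 2) (emb_add m).measurable.aemeasurable
      (measurable_id.pow_const 2).aestronglyMeasurable]
    have : (fun x : ℝ => (x + m)^2) = fun x : ℝ => x^2 + ((2*m) * x + m^2) := by
      ext x; ring
    rw [this, integral_add (std_integrable_poly 2)
      (by simpa using ((std_integrable_poly 1).const_mul (2*m)).add (integrable_const (m^2))),
      integral_add (by simpa using (std_integrable_poly 1).const_mul (2*m))
        (integrable_const (m^2)),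
      integral_const_mul, std_integral_two]
    have h1' : ∫ x, x ∂(gaussianReal 0 1) = 0 := std_integral_one
    rw [h1']
    simp

lemma gauss_moments {Ω : Type*} [MeasurableSpace Ω] (μ : Measure Ω)
    (X : Ω → ℝ) (hX : Measurable X) (m : ℝ) (hlaw : μ.map X = gaussianReal m 1) :
    Integrable X μ ∧ Integrable (fun ω => X ω ^ 2) μ ∧
    (∫ ω, X ω ∂μ) = m ∧ (∫ ω, X ω ^ 2 ∂μ) = 1 + m ^ 2 := by
  obtain ⟨i1, i2, e1, e2⟩ := gauss_facts m
  rw [← hlaw] at i1 i2 e1 e2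
  refine ⟨?_, ?_, ?_, ?_⟩
  · exact (integrable_map_measure measurable_id.aestronglyMeasurable hX.aemeasurable).mp i1
  · exact (integrable_map_measure (measurable_id.pow_const 2).aestronglyMeasurable
      hX.aemeasurable).mp i2
  · rw [← e1, integral_map (f := fun x : ℝ => x) hX.aemeasurable
      measurable_id.aestronglyMeasurable]
  · rw [← e2, integral_map (f := fun x : ℝ => x ^ 2) hX.aemeasurable
      (measurable_id.pow_const 2).aestronglyMeasurable]

open Finset in

lemma sum_arith (d p q : ℕ) (hp : 1 ≤ p) (hq : 1 ≤ q) (μv νv : Fin d → ℝ) :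
    ∑ t : Fin p × Fin q × Fin d, ∑ t' : Fin p × Fin q × Fin d,
      ((μv t.2.2 * μv t'.2.2 + if t.1 = t'.1 ∧ t.2.2 = t'.2.2 then (1:ℝ) else 0)
        * (νv t.2.2 * νv t'.2.2 + if t.2.1 = t'.2.1 ∧ t.2.2 = t'.2.2 then (1:ℝ) else 0))
    = ((p*q:ℝ) * ∑ j, μv j * νv j)^2 + (p:ℝ)^2 * q * ∑ j, μv j^2
      + (q:ℝ)^2 * p * ∑ j, νv j^2 + (p:ℝ)*q*d := by
  have key : ∀ t t' : Fin p × Fin q × Fin d,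
      ((μv t.2.2 * μv t'.2.2 + if t.1 = t'.1 ∧ t.2.2 = t'.2.2 then (1:ℝ) else 0)
        * (νv t.2.2 * νv t'.2.2 + if t.2.1 = t'.2.1 ∧ t.2.2 = t'.2.2 then (1:ℝ) else 0))
      = (μv t.2.2 * νv t.2.2) * (μv t'.2.2 * νv t'.2.2)
        + (μv t.2.2 * μv t'.2.2) * ((if t.2.1 = t'.2.1 then (1:ℝ) else 0) * (if t.2.2 = t'.2.2 then (1:ℝ) else 0))
        + (νv t.2.2 * νv t'.2.2) * ((if t.1 = t'.1 then (1:ℝ) else 0) * (if t.2.2 = t'.2.2 then (1:ℝ) else 0))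
        + ((if t.1 = t'.1 then (1:ℝ) else 0) * (if t.2.1 = t'.2.1 then (1:ℝ) else 0) * (if t.2.2 = t'.2.2 then (1:ℝ) else 0)) := by
    intro t t'
    by_cases h1 : t.1 = t'.1 <;> by_cases h2 : t.2.1 = t'.2.1 <;> by_cases h3 : t.2.2 = t'.2.2 <;>
      simp [h1, h2, h3] <;> ring
  simp only [key, Finset.sum_add_distrib]
  have e1 : ∑ t : Fin p × Fin q × Fin d, ∑ t' : Fin p × Fin q × Fin d,
      (μv t.2.2 * νv t.2.2) * (μv t'.2.2 * νv t'.2.2)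
      = ((p*q:ℝ) * ∑ j, μv j * νv j)^2 := by
    rw [← Finset.sum_mul_sum]
    have : ∑ t : Fin p × Fin q × Fin d, μv t.2.2 * νv t.2.2
        = (p*q:ℝ) * ∑ j, μv j * νv j := by
      rw [Fintype.sum_prod_type]
      simp only [Fintype.sum_prod_type, Finset.sum_const, Finset.card_univ, Fintype.card_fin,
        nsmul_eq_mul, ← Finset.mul_sum]
      ring
    rw [this, sq]
  have e2 : ∑ t : Fin p × Fin q × Fin d, ∑ t' : Fin p × Fin q × Fin d,
      (μv t.2.2 * μv t'.2.2) * ((if t.2.1 = t'.2.1 then (1:ℝ) else 0) * (if t.2.2 = t'.2.2 then (1:ℝ) else 0))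
      = (p:ℝ)^2 * q * ∑ j, μv j^2 := by
    simp only [Fintype.sum_prod_type]
    simp only [mul_ite, ite_mul, mul_one, mul_zero, zero_mul, one_mul,
      Finset.sum_ite_eq, Finset.sum_ite_eq', Finset.mem_univ, if_true,
      Finset.sum_const, Finset.card_univ, Fintype.card_fin, nsmul_eq_mul, ← Finset.mul_sum]
    simp only [← pow_two]
    ring
  have e3 : ∑ t : Fin p × Fin q × Fin d, ∑ t' : Fin p × Fin q × Fin d,
      (νv t.2.2 * νv t'.2.2) * ((if t.1 = t'.1 then (1:ℝ) else 0) * (if t.2.2 = t'.2.2 then (1:ℝ) else 0))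
      = (q:ℝ)^2 * p * ∑ j, νv j^2 := by
    simp only [Fintype.sum_prod_type]
    simp only [mul_ite, ite_mul, mul_one, mul_zero, zero_mul, one_mul,
      Finset.sum_ite_eq, Finset.sum_ite_eq', Finset.mem_univ, if_true,
      Finset.sum_const, Finset.card_univ, Fintype.card_fin, nsmul_eq_mul, ← Finset.mul_sum]
    simp only [← pow_two]
    ring
  have e4 : ∑ t : Fin p × Fin q × Fin d, ∑ t' : Fin p × Fin q × Fin d,
      ((if t.1 = t'.1 then (1:ℝ) else 0) * (if t.2.1 = t'.2.1 then (1:ℝ) else 0) * (if t.2.2 = t'.2.2 then (1:ℝ) else 0))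
      = (p:ℝ)*q*d := by
    simp only [Fintype.sum_prod_type]
    simp only [mul_ite, ite_mul, mul_one, mul_zero, zero_mul, one_mul,
      Finset.sum_ite_eq, Finset.sum_ite_eq', Finset.mem_univ, if_true,
      Finset.sum_const, Finset.card_univ, Fintype.card_fin, nsmul_eq_mul, ← Finset.mul_sum]
    ring
  rw [e1, e2, e3, e4]

lemma pair_exp {Ω : Type*} [MeasurableSpace Ω] {μ : Measure Ω} [IsProbabilityMeasure μ]
    {ι : Type*} [DecidableEq ι] {Z : ι → Ω → ℝ} (hmeas : ∀ s, Measurable (Z s))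
    (hindep : iIndepFun Z μ) (M : ι → ℝ)
    (hM : ∀ s, μ.map (Z s) = gaussianReal (M s) 1) (a b : ι) :
    Integrable (fun ω => Z a ω * Z b ω) μ ∧
    (∫ ω, Z a ω * Z b ω ∂μ) = M a * M b + (if a = b then 1 else 0) := by
  obtain ⟨ia1, ia2, ea1, ea2⟩ := gauss_moments μ (Z a) (hmeas a) (M a) (hM a)
  by_cases hab : a = b
  · subst hab
    have he : (fun ω => Z a ω * Z a ω) = fun ω => Z a ω ^ 2 := by ext ω; ring
    refine ⟨by rw [he]; exact ia2, ?_⟩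
    rw [he, ea2, if_pos rfl]; ring
  · obtain ⟨ib1, _, eb1, _⟩ := gauss_moments μ (Z b) (hmeas b) (M b) (hM b)
    have hI : IndepFun (Z a) (Z b) μ := hindep.indepFun hab
    refine ⟨hI.integrable_mul ia1 ib1, ?_⟩
    have h : (∫ ω, Z a ω * Z b ω ∂μ) = (∫ ω, Z a ω ∂μ) * ∫ ω, Z b ω ∂μ :=
      hI.integral_mul_eq_mul_integral ia1.aestronglyMeasurable ib1.aestronglyMeasurable
    rw [h, ea1, eb1, if_neg hab, add_zero]


lemma quad_exp {Ω : Type*} [MeasurableSpace Ω] {μ : Measure Ω} [IsProbabilityMeasure μ]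
    {ι : Type*} [DecidableEq ι] {Z : ι → Ω → ℝ} (hmeas : ∀ s, Measurable (Z s))
    (hindep : iIndepFun Z μ) (M : ι → ℝ)
    (hM : ∀ s, μ.map (Z s) = gaussianReal (M s) 1) (a b c e : ι)
    (hab : a ≠ b) (hae : a ≠ e) (hcb : c ≠ b) (hce : c ≠ e) :
    Integrable (fun ω => (Z a ω * Z c ω) * (Z b ω * Z e ω)) μ ∧
    (∫ ω, (Z a ω * Z c ω) * (Z b ω * Z e ω) ∂μ)
      = (M a * M c + if a = c then 1 else 0) * (M b * M e + if b = e then 1 else 0) := by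
  obtain ⟨iac, eac⟩ := pair_exp hmeas hindep M hM a c
  obtain ⟨ibe, ebe⟩ := pair_exp hmeas hindep M hM b e
  have hI : IndepFun (fun ω => Z a ω * Z c ω) (fun ω => Z b ω * Z e ω) μ := by
    exact hindep.indepFun_mul_mul hmeas a c b e hab hae hcb hce
  have h : (∫ ω, (Z a ω * Z c ω) * (Z b ω * Z e ω) ∂μ)
      = (∫ ω, Z a ω * Z c ω ∂μ) * ∫ ω, Z b ω * Z e ω ∂μ :=
    hI.integral_mul_eq_mul_integral iac.aestronglyMeasurable ibe.aestronglyMeasurable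
  exact ⟨hI.integrable_mul iac ibe, by rw [h, eac, ebe]⟩


end CrossClass

open CrossClass

/-- Cross-class estimator. Let `x_1,…,x_p` be i.i.d. `N(μ, I_d)` and
`x'_1,…,x'_q` i.i.d. `N(ν, I_d)`, all independent (modeled here by all coordinates of all
vectors being independent with the corresponding Gaussian coordinate distributions). Then
`T = (1/(pq))·Σ_k Σ_l ⟨x_k, x'_l⟩` satisfies `E[T] = ⟨μ, ν⟩` and
`Var(T) = ‖μ‖²/q + ‖ν‖²/p + d/(pq)`. -/
theorem cross_class_estimator_mean_variance
    (d p q : ℕ) (hd : 1 ≤ d) (hp : 1 ≤ p) (hq : 1 ≤ q)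
    (μv νv : Fin d → ℝ)
    (Ω : Type*) [MeasurableSpace Ω] (μ : Measure Ω) [IsProbabilityMeasure μ]
    (Z : (Fin p ⊕ Fin q) × Fin d → Ω → ℝ)
    (hmeas : ∀ s, Measurable (Z s))
    (hindep : iIndepFun Z μ)
    (hlawX : ∀ (k : Fin p) (j : Fin d),
      μ.map (Z (Sum.inl k, j)) = gaussianReal (μv j) 1)
    (hlawX' : ∀ (l : Fin q) (j : Fin d),
      μ.map (Z (Sum.inr l, j)) = gaussianReal (νv j) 1)
    (T : Ω → ℝ)
    (hT : T = fun ω => (1 / ((p : ℝ) * q)) *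
      ∑ k : Fin p, ∑ l : Fin q, ∑ j : Fin d,
        Z (Sum.inl k, j) ω * Z (Sum.inr l, j) ω) :
    (∫ ω, T ω ∂μ) = ∑ j : Fin d, μv j * νv j ∧
    variance T μ
      = (∑ j : Fin d, μv j ^ 2) / q + (∑ j : Fin d, νv j ^ 2) / p
        + (d : ℝ) / ((p : ℝ) * q) := by
  classical
  have hp0 : (p:ℝ) ≠ 0 := Nat.cast_ne_zero.mpr (by omega)
  have hq0 : (q:ℝ) ≠ 0 := Nat.cast_ne_zero.mpr (by omega)
  set A : Fin p × Fin q × Fin d → (Fin p ⊕ Fin q) × Fin d :=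
    fun t => (Sum.inl t.1, t.2.2) with hA
  set B : Fin p × Fin q × Fin d → (Fin p ⊕ Fin q) × Fin d :=
    fun t => (Sum.inr t.2.1, t.2.2) with hB
  set M : (Fin p ⊕ Fin q) × Fin d → ℝ :=
    fun s => Sum.elim (fun _ => μv s.2) (fun _ => νv s.2) s.1 with hMdef
  have hM : ∀ s, μ.map (Z s) = gaussianReal (M s) 1 := by
    rintro ⟨(k | l), j⟩
    · exact hlawX k j
    · exact hlawX' l j
  set F : Fin p × Fin q × Fin d → Ω → ℝ := fun t ω => Z (A t) ω * Z (B t) ω with hF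
  set S : Ω → ℝ := fun ω => ∑ t : Fin p × Fin q × Fin d, F t ω with hS
  have hAB : ∀ t t' : Fin p × Fin q × Fin d, A t ≠ B t' := by
    intro t t' h
    simp only [hA, hB, Prod.mk.injEq] at h
    exact Sum.inl_ne_inr h.1
  -- pair facts
  have hpairF : ∀ t : Fin p × Fin q × Fin d,
      Integrable (F t) μ ∧ (∫ ω, F t ω ∂μ) = μv t.2.2 * νv t.2.2 := by
    intro t
    obtain ⟨hi, he⟩ := pair_exp hmeas hindep M hM (A t) (B t)
    refine ⟨hi, ?_⟩
    rw [he, if_neg (hAB t t), add_zero]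
    simp [hMdef, hA, hB]
  -- T in terms of S
  have hTS : T = fun ω => (1 / ((p : ℝ) * q)) * S ω := by
    rw [hT]
    funext ω
    congr 1
    rw [hS]
    simp only [hF, hA, hB, Fintype.sum_prod_type]
  -- mean of S
  have hSsum : ∑ t : Fin p × Fin q × Fin d, μv t.2.2 * νv t.2.2
      = (p*q:ℝ) * ∑ j, μv j * νv j := by
    rw [Fintype.sum_prod_type]
    simp only [Fintype.sum_prod_type, Finset.sum_const, Finset.card_univ, Fintype.card_fin,
      nsmul_eq_mul, ← Finset.mul_sum]
    ring
  have hES : (∫ ω, S ω ∂μ) = (p*q:ℝ) * ∑ j, μv j * νv j := by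
    rw [hS]
    rw [integral_finset_sum _ (fun t _ => (hpairF t).1)]
    rw [Finset.sum_congr rfl (fun t _ => (hpairF t).2), hSsum]
  have hmean : (∫ ω, T ω ∂μ) = ∑ j : Fin d, μv j * νv j := by
    rw [hTS, integral_const_mul, hES]
    field_simp
  refine ⟨hmean, ?_⟩
  -- variance
  have hquad : ∀ t t' : Fin p × Fin q × Fin d,
      Integrable (fun ω => F t ω * F t' ω) μ ∧
      (∫ ω, F t ω * F t' ω ∂μ)
        = (M (A t) * M (A t') + if A t = A t' then 1 else 0)
          * (M (B t) * M (B t') + if B t = B t' then 1 else 0) := by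
    intro t t'
    obtain ⟨hi, he⟩ := quad_exp hmeas hindep M hM (A t) (B t) (A t') (B t')
      (hAB t t) (hAB t t') (hAB t' t) (hAB t' t')
    have hre : (fun ω => F t ω * F t' ω)
        = fun ω => (Z (A t) ω * Z (A t') ω) * (Z (B t) ω * Z (B t') ω) := by
      funext ω
      simp only [hF]
      ring
    rw [hre]
    exact ⟨hi, he⟩
  have hSmeas : Measurable S := by
    rw [hS]
    exact Finset.measurable_sum _ fun t _ => ((hmeas (A t)).mul (hmeas (B t)))
  have hSsq : (fun ω => S ω ^ 2)
      = fun ω => ∑ t : Fin p × Fin q × Fin d, ∑ t' : Fin p × Fin q × Fin d, F t ω * F t' ω := by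
    funext ω
    rw [hS, sq, Finset.sum_mul_sum]
  have hIS2 : Integrable (fun ω => S ω ^ 2) μ := by
    rw [hSsq]
    exact integrable_finset_sum _ (fun t _ =>
      integrable_finset_sum _ (fun t' _ => (hquad t t').1))
  have hmem : MemLp S 2 μ := (memLp_two_iff_integrable_sq hSmeas.aestronglyMeasurable).mpr hIS2
  have hES2 : (∫ ω, S ω ^ 2 ∂μ)
      = ∑ t : Fin p × Fin q × Fin d, ∑ t' : Fin p × Fin q × Fin d,
        ((μv t.2.2 * μv t'.2.2 + if t.1 = t'.1 ∧ t.2.2 = t'.2.2 then (1:ℝ) else 0)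
          * (νv t.2.2 * νv t'.2.2 + if t.2.1 = t'.2.1 ∧ t.2.2 = t'.2.2 then (1:ℝ) else 0)) := by
    rw [show (∫ ω, S ω ^ 2 ∂μ) = ∫ ω, (∑ t : Fin p × Fin q × Fin d,
        ∑ t' : Fin p × Fin q × Fin d, F t ω * F t' ω) ∂μ by rw [← hSsq]]
    rw [integral_finset_sum _ (fun t _ =>
      integrable_finset_sum _ (fun t' _ => (hquad t t').1))]
    refine Finset.sum_congr rfl (fun t _ => ?_)
    rw [integral_finset_sum _ (fun t' _ => (hquad t t').1)]
    refine Finset.sum_congr rfl (fun t' _ => ?_)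
    rw [(hquad t t').2]
    congr 1
    · simp [hMdef, hA, Prod.mk.injEq, Sum.inl.injEq]
    · simp [hMdef, hB, Prod.mk.injEq, Sum.inr.injEq]
  have hVarS : variance S μ
      = (p:ℝ)^2 * q * ∑ j, μv j^2 + (q:ℝ)^2 * p * ∑ j, νv j^2 + (p:ℝ)*q*d := by
    rw [variance_eq_sub hmem]
    simp only [Pi.pow_apply]
    rw [hES2, hES, sum_arith d p q hp hq μv νv]
    ring
  have hvT : variance T μ = (1 / ((p:ℝ)*q))^2 * variance S μ := by
    rw [hTS]
    exact variance_const_mul (1 / ((p:ℝ)*q)) S μ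
  rw [hvT, hVarS]
  field_simp
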